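/- Let a < b be real numbers, let c_1, …, c_K ∈ ℝ^n be constant vectors, let α be a chattering measure, and let N be a positive integer. Partition [a,b] into N subintervals of equal length Δ = (b−a)/N, and on each subinterval apply the explicit chattering construction (consecutive pieces of lengths α_1 Δ, …, α_K Δ with values c_1, …, c_K); call the resulting function g_N : [a,b] → ℝ^n. Then for every t ∈ [a,b], ‖∫_a^t (g_N(τ) − Σ_{k=1}^K α_k c_k) dτ‖ ≤ 2 · ((b−a)/N) · max_{1 ≤ k ≤ K} ‖c_k‖. In particular, sup_{t∈[a,b]} ‖∫_a^t (g_N − Σ_k α_k c_k)‖ → 0 as N → ∞, so for every ε > 0 there exists N such that g_N witnesses the Chattering Lemma bound with that ε. -/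

import Mathlib

open MeasureTheory Set

lemma chat_find_piece (K : ℕ) (hK : 0 < K) (α : ℕ → ℝ)
    (hα1 : ∑ j ∈ Finset.range K, α j = 1)
    (s : ℝ) (hs0 : 0 ≤ s) (hs1 : s < 1) :
    ∃ k < K, (∑ j ∈ Finset.range k, α j) ≤ s ∧ s < ∑ j ∈ Finset.range (k+1), α j := by
  have hP : ∃ k, s < ∑ j ∈ Finset.range (k+1), α j :=
    ⟨K - 1, by rw [Nat.sub_add_cancel hK, hα1]; exact hs1⟩
  refine ⟨Nat.find hP, ?_, ?_, Nat.find_spec hP⟩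
  · have h1 : Nat.find hP ≤ K - 1 :=
      Nat.find_le (by rw [Nat.sub_add_cancel hK, hα1]; exact hs1)
    omega
  · rcases Nat.eq_zero_or_pos (Nat.find hP) with h | h
    · simpa [h] using hs0
    · have h2 := Nat.find_min hP (Nat.sub_lt h one_pos)
      have h3 : Nat.find hP - 1 + 1 = Nat.find hP := by omega
      rw [h3] at h2
      exact not_lt.mp h2

lemma chat_find_sub (a b : ℝ) (hab : a < b) (N : ℕ) (hN : 0 < N)
    (τ : ℝ) (hτ : τ ∈ Ico a b) :
    ∃ i < N, a + i * ((b - a) / N) ≤ τ ∧ τ < a + (i + 1) * ((b - a) / N) := by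
  set Δ : ℝ := (b - a) / N with hΔdef
  have hN' : (0:ℝ) < N := Nat.cast_pos.mpr hN
  have hΔ : 0 < Δ := div_pos (by linarith) hN'
  obtain ⟨hτa, hτb⟩ := hτ
  set i : ℕ := ⌊(τ - a) / Δ⌋₊ with hidef
  have hq0 : 0 ≤ (τ - a) / Δ := div_nonneg (by linarith) hΔ.le
  have hil : (i : ℝ) ≤ (τ - a) / Δ := Nat.floor_le hq0
  have hir : (τ - a) / Δ < i + 1 := Nat.lt_floor_add_one _
  have hiN : i < N := by
    have h : (τ - a) / Δ < N := by
      rw [div_lt_iff₀ hΔ]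
      have h2 : (N:ℝ) * Δ = b - a := by rw [hΔdef]; field_simp
      rw [h2]; linarith
    exact (Nat.floor_lt hq0).mpr h
  refine ⟨i, hiN, ?_, ?_⟩
  · have := (le_div_iff₀ hΔ).mp hil; linarith
  · have := (div_lt_iff₀ hΔ).mp hir; linarith

lemma chat_mem_piece (K : ℕ) (hK : 0 < K) (α : ℕ → ℝ)
    (hα1 : ∑ j ∈ Finset.range K, α j = 1)
    (a b : ℝ) (hab : a < b) (N : ℕ) (hN : 0 < N) (τ : ℝ) (hτ : τ ∈ Ico a b) :
    ∃ i < N, ∃ k < K,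
      τ ∈ Ico (a + i * ((b - a) / N) + ((b - a) / N) * ∑ j ∈ Finset.range k, α j)
        (a + i * ((b - a) / N) + ((b - a) / N) * ∑ j ∈ Finset.range (k + 1), α j) := by
  set Δ : ℝ := (b - a) / N with hΔdef
  have hN' : (0:ℝ) < N := Nat.cast_pos.mpr hN
  have hΔ : 0 < Δ := div_pos (by linarith [hτ.1, hτ.2]) hN'
  obtain ⟨i, hiN, h1, h2⟩ := chat_find_sub a b hab N hN τ hτ
  set s : ℝ := (τ - (a + i * Δ)) / Δ with hsdef
  have hs0 : 0 ≤ s := div_nonneg (by linarith) hΔ.le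
  have hs1 : s < 1 := by
    rw [hsdef, div_lt_one hΔ]; linarith
  obtain ⟨k, hkK, hks, hsk⟩ := chat_find_piece K hK α hα1 s hs0 hs1
  refine ⟨i, hiN, k, hkK, ?_, ?_⟩
  · have := (mul_le_mul_iff_right₀ hΔ).mpr hks
    rw [hsdef, mul_div_cancel₀ _ hΔ.ne'] at this
    linarith
  · have := (mul_lt_mul_iff_right₀ hΔ).mpr hsk
    rw [hsdef, mul_div_cancel₀ _ hΔ.ne'] at this
    linarith

lemma chat_main (n K : ℕ) (hK : 0 < K) (a b : ℝ) (hab : a < b)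
    (c : ℕ → EuclideanSpace ℝ (Fin n))
    (α : ℕ → ℝ) (hα0 : ∀ k < K, 0 ≤ α k)
    (hα1 : ∑ k ∈ Finset.range K, α k = 1)
    (N : ℕ) (hN : 0 < N) (g : ℝ → EuclideanSpace ℝ (Fin n))
    (hg : ∀ i < N, ∀ k < K,
      ∀ t ∈ Ico (a + i * ((b - a) / N) + ((b - a) / N) * ∑ j ∈ Finset.range k, α j)
        (a + i * ((b - a) / N) + ((b - a) / N) * ∑ j ∈ Finset.range (k + 1), α j),
        g t = c k)
    (t : ℝ) (ht : t ∈ Icc a b) :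
    ‖∫ τ in a..t, (g τ - ∑ k ∈ Finset.range K, α k • c k)‖ ≤
      2 * ((b - a) / N) *
        (Finset.range K).sup' (Finset.nonempty_range_iff.mpr hK.ne')
          (fun k => ‖c k‖) := by
  have hN' : (0:ℝ) < N := Nat.cast_pos.mpr hN
  set Δ : ℝ := (b - a) / N with hΔdef
  have hΔ : 0 < Δ := div_pos (by linarith) hN'
  set m : EuclideanSpace ℝ (Fin n) := ∑ k ∈ Finset.range K, α k • c k with hmdef
  set M : ℝ := (Finset.range K).sup' (Finset.nonempty_range_iff.mpr hK.ne')
      (fun k => ‖c k‖) with hMdef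
  have hcM : ∀ k < K, ‖c k‖ ≤ M := fun k hk =>
    Finset.le_sup' (fun k => ‖c k‖) (Finset.mem_range.mpr hk)
  have hM0 : 0 ≤ M := le_trans (norm_nonneg (c 0)) (hcM 0 hK)
  have hmM : ‖m‖ ≤ M := by
    calc ‖m‖ ≤ ∑ k ∈ Finset.range K, ‖α k • c k‖ := norm_sum_le _ _
    _ ≤ ∑ k ∈ Finset.range K, α k * M := by
        refine Finset.sum_le_sum fun k hk => ?_
        rw [norm_smul, Real.norm_eq_abs,
          abs_of_nonneg (hα0 k (Finset.mem_range.mp hk))]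
        exact mul_le_mul_of_nonneg_left (hcM k (Finset.mem_range.mp hk))
          (hα0 k (Finset.mem_range.mp hk))
    _ = M := by rw [← Finset.sum_mul, hα1, one_mul]
  -- pointwise bound and value
  have hgval : ∀ τ ∈ Ico a b, ∃ k < K, g τ = c k := by
    intro τ hτ
    obtain ⟨i, hiN, k, hkK, hmem⟩ := chat_mem_piece K hK α hα1 a b hab N hN τ hτ
    exact ⟨k, hkK, hg i hiN k hkK τ hmem⟩
  have hgbd : ∀ τ ∈ Ico a b, ‖g τ - m‖ ≤ 2 * M := by
    intro τ hτ
    obtain ⟨k, hkK, hk⟩ := hgval τ hτ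
    rw [hk]
    calc ‖c k - m‖ ≤ ‖c k‖ + ‖m‖ := norm_sub_le _ _
    _ ≤ M + M := add_le_add (hcM k hkK) hmM
    _ = 2 * M := by ring
  -- integrability of g on Icc a b
  have hIcc : IntegrableOn g (Icc a b) := by
    have hsub : Icc a b ⊆ (⋃ i ∈ Finset.range N, ⋃ k ∈ Finset.range K,
        Ico (a + i * Δ + Δ * ∑ j ∈ Finset.range k, α j)
          (a + i * Δ + Δ * ∑ j ∈ Finset.range (k + 1), α j)) ∪ {b} := by
      intro τ hτ
      rcases eq_or_lt_of_le hτ.2 with h | h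
      · exact Or.inr (by simp [h])
      · obtain ⟨i, hiN, k, hkK, hmem⟩ :=
          chat_mem_piece K hK α hα1 a b hab N hN τ ⟨hτ.1, h⟩
        exact Or.inl (mem_biUnion (Finset.mem_range.mpr hiN)
          (mem_biUnion (Finset.mem_range.mpr hkK) hmem))
    refine IntegrableOn.mono_set ?_ hsub
    refine IntegrableOn.union ?_ ?_
    · rw [integrableOn_finset_iUnion]
      intro i hi
      rw [integrableOn_finset_iUnion]
      intro k hk
      refine Integrable.congr
        (integrableOn_const (C := c (k:ℕ)) measure_Ico_lt_top.ne) ?_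
      · filter_upwards [ae_restrict_mem measurableSet_Ico] with τ hτ
        exact (hg i (Finset.mem_range.mp hi) k (Finset.mem_range.mp hk) τ hτ).symm
    · rw [IntegrableOn, Measure.restrict_eq_zero.mpr (by simp)]
      exact integrable_zero_measure
  have hgm : IntegrableOn (fun τ => g τ - m) (Icc a b) :=
    hIcc.sub (integrableOn_const measure_Icc_lt_top.ne)
  have hII : ∀ x ∈ Icc a b, ∀ y ∈ Icc a b,
      IntervalIntegrable (fun τ => g τ - m) volume x y := by
    intro x hx y hy
    exact (hgm.mono_set (uIcc_subset_Icc hx hy)).intervalIntegrable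
  have hIIg : ∀ x ∈ Icc a b, ∀ y ∈ Icc a b,
      IntervalIntegrable g volume x y := by
    intro x hx y hy
    exact (hIcc.mono_set (uIcc_subset_Icc hx hy)).intervalIntegrable
  -- membership of grid points
  have hgrid : ∀ i : ℕ, i ≤ N → a + i * Δ ∈ Icc a b := by
    intro i hi
    constructor
    · have : (0:ℝ) ≤ i * Δ := mul_nonneg (Nat.cast_nonneg i) hΔ.le
      linarith
    · have h1 : (i:ℝ) ≤ N := Nat.cast_le.mpr hi
      have h2 : (i:ℝ) * Δ ≤ N * Δ := mul_le_mul_of_nonneg_right h1 hΔ.le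
      have h3 : (N:ℝ) * Δ = b - a := by rw [hΔdef]; field_simp
      linarith
  have hσ : ∀ k ≤ K, 0 ≤ (∑ j ∈ Finset.range k, α j) ∧ (∑ j ∈ Finset.range k, α j) ≤ 1 := by
    intro k hk
    constructor
    · exact Finset.sum_nonneg fun j hj => hα0 j (lt_of_lt_of_le (Finset.mem_range.mp hj) hk)
    · rw [← hα1]
      exact Finset.sum_le_sum_of_subset_of_nonneg
        (Finset.range_subset_range.mpr hk) (fun j hj _ => hα0 j (Finset.mem_range.mp hj))
  -- integral over one full subinterval
  have hfull : ∀ i < N, (∫ τ in (a + i * Δ)..(a + (i+1) * Δ), g τ) = Δ • m := by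
    intro i hiN
    set p : ℕ → ℝ := fun k => a + i * Δ + Δ * ∑ j ∈ Finset.range k, α j with hpdef
    have hple : ∀ k < K, p k ≤ p (k+1) := by
      intro k hk
      have h : (0:ℝ) ≤ Δ * α k := mul_nonneg hΔ.le (hα0 k hk)
      simp only [hpdef, Finset.sum_range_succ]
      nlinarith [h]
    have hpmem : ∀ k ≤ K, p k ∈ Icc a b := by
      intro k hk
      obtain ⟨h0, h1⟩ := hσ k hk
      have hg1 := hgrid i (le_of_lt hiN)
      have hg2 := hgrid (i+1) hiN
      push_cast at hg2
      constructor
      · have : (0:ℝ) ≤ Δ * ∑ j ∈ Finset.range k, α j := mul_nonneg hΔ.le h0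
        have := hg1.1
        simp only [hpdef]; linarith
      · have h2 : Δ * ∑ j ∈ Finset.range k, α j ≤ Δ := by nlinarith
        have := hg2.2
        simp only [hpdef]; linarith
    have hpint : ∀ k < K, IntervalIntegrable g volume (p k) (p (k+1)) :=
      fun k hk => hIIg _ (hpmem k (le_of_lt hk)) _ (hpmem (k+1) hk)
    have hpiece : ∀ k < K, (∫ τ in (p k)..(p (k+1)), g τ) = (Δ * α k) • c k := by
      intro k hk
      rw [intervalIntegral.integral_of_le (hple k hk)]
      rw [integral_Ioc_eq_integral_Ioo]
      rw [setIntegral_congr_fun measurableSet_Ioo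
        (fun τ hτ => hg i hiN k hk τ ⟨le_of_lt hτ.1, hτ.2⟩)]
      rw [setIntegral_const, measureReal_def, Real.volume_Ioo]
      congr 1
      rw [ENNReal.toReal_ofReal (sub_nonneg.mpr (hple k hk))]
      simp only [hpdef, Finset.sum_range_succ]
      ring
    have hp0 : p 0 = a + i * Δ := by simp [hpdef]
    have hpK : p K = a + (i+1) * Δ := by
      simp only [hpdef, hα1]; ring
    calc (∫ τ in (a + i * Δ)..(a + (i+1) * Δ), g τ)
        = ∫ τ in (p 0)..(p K), g τ := by rw [hp0, hpK]
      _ = ∑ k ∈ Finset.range K, ∫ τ in (p k)..(p (k+1)), g τ :=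
          (intervalIntegral.sum_integral_adjacent_intervals hpint).symm
      _ = ∑ k ∈ Finset.range K, (Δ * α k) • c k :=
          Finset.sum_congr rfl fun k hk => hpiece k (Finset.mem_range.mp hk)
      _ = Δ • m := by
          rw [hmdef, Finset.smul_sum]
          exact Finset.sum_congr rfl fun k _ => by rw [smul_smul]
  -- running integral vanishes at grid points
  have hzero : ∀ i ≤ N, (∫ τ in a..(a + i * Δ), (g τ - m)) = 0 := by
    intro i hi
    set q : ℕ → ℝ := fun j => a + j * Δ with hqdef
    have hqint : ∀ j < i, IntervalIntegrable (fun τ => g τ - m) volume (q j) (q (j+1)) := by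
      intro j hj
      have h1 : j ≤ N := le_trans (le_of_lt hj) hi
      have h2 : j + 1 ≤ N := le_trans hj hi
      exact hII _ (by simpa [hqdef] using hgrid j h1) _
        (by simpa [hqdef] using hgrid (j+1) h2)
    have hq0 : q 0 = a := by simp [hqdef]
    have heach : ∀ j < i, (∫ τ in (q j)..(q (j+1)), (g τ - m)) = 0 := by
      intro j hj
      have hjN : j < N := lt_of_lt_of_le hj hi
      have h1 : j ≤ N := le_of_lt hjN
      have h2 : j + 1 ≤ N := hjN
      rw [intervalIntegral.integral_sub
        (hIIg _ (by simpa [hqdef] using hgrid j h1) _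
          (by simpa [hqdef] using hgrid (j+1) h2))
        intervalIntegrable_const]
      have hq1 : q j = a + j * Δ := rfl
      have hq2 : q (j+1) = a + (j+1) * Δ := by simp [hqdef]
      rw [hq1, hq2, hfull j hjN, intervalIntegral.integral_const]
      have : a + (↑j + 1) * Δ - (a + ↑j * Δ) = Δ := by ring
      rw [this, sub_self]
    calc (∫ τ in a..(a + i * Δ), (g τ - m))
        = ∫ τ in (q 0)..(q i), (g τ - m) := by rw [hq0]
      _ = ∑ j ∈ Finset.range i, ∫ τ in (q j)..(q (j+1)), (g τ - m) :=
          (intervalIntegral.sum_integral_adjacent_intervals hqint).symm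
      _ = 0 := Finset.sum_eq_zero fun j hj => heach j (Finset.mem_range.mp hj)
  -- conclusion
  rcases eq_or_lt_of_le ht.2 with hb | hb
  · have hbN : a + N * Δ = b := by rw [hΔdef]; field_simp; ring
    rw [hb, ← hbN, hzero N le_rfl, norm_zero]
    positivity
  · obtain ⟨i, hiN, h1, h2⟩ := chat_find_sub a b hab N hN t ⟨ht.1, hb⟩
    have hai : a + i * Δ ∈ Icc a b := hgrid i (le_of_lt hiN)
    have hsplit : (∫ τ in a..t, (g τ - m)) =
        (∫ τ in a..(a + i * Δ), (g τ - m)) + ∫ τ in (a + i * Δ)..t, (g τ - m) :=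
      (intervalIntegral.integral_add_adjacent_intervals
        (hII a (left_mem_Icc.mpr hab.le) _ hai) (hII _ hai t ht)).symm
    rw [hsplit, hzero i (le_of_lt hiN), zero_add]
    have hbd : ‖∫ τ in (a + i * Δ)..t, (g τ - m)‖ ≤ 2 * M * |t - (a + i * Δ)| := by
      refine intervalIntegral.norm_integral_le_of_norm_le_const ?_
      intro x hx
      rw [uIoc_of_le h1] at hx
      exact hgbd x ⟨le_trans hai.1 (le_of_lt hx.1), lt_of_le_of_lt hx.2 hb⟩
    refine le_trans hbd ?_
    rw [abs_of_nonneg (by linarith)]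
    have h3 : t - (a + i * Δ) ≤ Δ := by linarith
    nlinarith

/-- Quantitative Chattering Lemma for constant levels: partition `[a,b]` into
`N` subintervals of length `Δ = (b-a)/N` and apply, on each, the explicit
chattering construction with constant levels `c 0, …, c (K-1)` and chattering
measure `α` (value `c k` on the piece `[aᵢ + Δ·σ k, aᵢ + Δ·σ (k+1))`, where
`aᵢ = a + i·Δ` and `σ k` is the `k`-th partial sum of `α`).  Then the running
integral of `g_N − ∑ k, α k • c k` is bounded in norm by
`2 · ((b-a)/N) · max_k ‖c k‖`; in particular, for every `ε > 0` there is an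
`N` for which `g_N` witnesses the Chattering Lemma bound with that `ε`. -/
theorem chattering_quantitative
    (n K : ℕ) (hK : 0 < K) (a b : ℝ) (hab : a < b)
    (c : ℕ → EuclideanSpace ℝ (Fin n))
    (α : ℕ → ℝ) (hα0 : ∀ k < K, 0 ≤ α k)
    (hα1 : ∑ k ∈ Finset.range K, α k = 1) :
    (∀ N : ℕ, 0 < N → ∀ g : ℝ → EuclideanSpace ℝ (Fin n),
      (∀ i < N, ∀ k < K,
        ∀ t ∈ Ico (a + i * ((b - a) / N) + ((b - a) / N) * ∑ j ∈ Finset.range k, α j)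
          (a + i * ((b - a) / N) + ((b - a) / N) * ∑ j ∈ Finset.range (k + 1), α j),
          g t = c k) →
      ∀ t ∈ Icc a b,
        ‖∫ τ in a..t, (g τ - ∑ k ∈ Finset.range K, α k • c k)‖ ≤
          2 * ((b - a) / N) *
            (Finset.range K).sup' (Finset.nonempty_range_iff.mpr hK.ne')
              (fun k => ‖c k‖)) ∧
    (∀ ε > (0 : ℝ), ∃ N : ℕ, 0 < N ∧ ∀ g : ℝ → EuclideanSpace ℝ (Fin n),
      (∀ i < N, ∀ k < K,
        ∀ t ∈ Ico (a + i * ((b - a) / N) + ((b - a) / N) * ∑ j ∈ Finset.range k, α j)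
          (a + i * ((b - a) / N) + ((b - a) / N) * ∑ j ∈ Finset.range (k + 1), α j),
          g t = c k) →
      ∀ t ∈ Icc a b,
        ‖∫ τ in a..t, (g τ - ∑ k ∈ Finset.range K, α k • c k)‖ < ε) := by
  constructor
  · intro N hN g hg t ht
    exact chat_main n K hK a b hab c α hα0 hα1 N hN g hg t ht
  · intro ε hε
    set M : ℝ := (Finset.range K).sup' (Finset.nonempty_range_iff.mpr hK.ne')
      (fun k => ‖c k‖) with hMdef
    have hM0 : 0 ≤ M := le_trans (norm_nonneg (c 0))
      (Finset.le_sup' (fun k => ‖c k‖) (Finset.mem_range.mpr hK))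
    obtain ⟨N, hNgt⟩ := exists_nat_gt (2 * (b - a) * (M + 1) / ε)
    have hpos : (0:ℝ) < 2 * (b - a) * (M + 1) / ε := by
      have h1 : (0:ℝ) < b - a := by linarith
      have h2 : (0:ℝ) < M + 1 := by linarith
      positivity
    have hNpos : 0 < N := Nat.cast_pos.mp (lt_trans hpos hNgt)
    have hN' : (0:ℝ) < N := Nat.cast_pos.mpr hNpos
    refine ⟨N, hNpos, fun g hg t ht => ?_⟩
    refine lt_of_le_of_lt (chat_main n K hK a b hab c α hα0 hα1 N hNpos g hg t ht) ?_
    rw [div_lt_iff₀ hε] at hNgt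
    have heq : 2 * ((b - a) / N) * M = 2 * (b - a) * M / N := by ring
    rw [heq, div_lt_iff₀ hN']
    nlinarith [hab, hM0]
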